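/- Let R and R' be synchronous orders on ℕ with disjoint supports. Then the relation R + R' := R ∪ R' ∪ (supp(R) × supp(R')) is a synchronous order on ℕ, and (supp(R + R'), R + R') is order-isomorphic to the lexicographic sum of (supp(R), R) followed by (supp(R'), R') (every element of supp(R) precedes every element of supp(R'), and each part keeps its order). -/

import Mathlib

/-- Encoding of a pair of naturals as a word over the alphabet `Fin 3`,
where letter `0` stands for `B`, `1` for `L`, `2` for `R`. -/
def encPair (k l : ℕ) : List (Fin 3) :=
  (List.range (max k l)).map (fun i => if i < min k l then 0 else if i < k then 1 else 2)

/-- A binary relation on ℕ is synchronous if the language of encodings of its pairs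
is regular. -/
def SyncRel (R : ℕ → ℕ → Prop) : Prop :=
  Language.IsRegular {w : List (Fin 3) | ∃ k l, R k l ∧ encPair k l = w}

/-- The support of a binary relation on ℕ. -/
def supp (R : ℕ → ℕ → Prop) : Set ℕ := {x | ∃ y, R x y ∨ R y x}

/-- A (strict partial) order on ℕ: a transitive relation with no 2-cycle
(in particular irreflexive). -/
def IsOrderRel (R : ℕ → ℕ → Prop) : Prop :=
  (∀ x y z, R x y → R y z → R x z) ∧ ¬∃ x y, R x y ∧ R y x

/-- The relation is linear if any two distinct elements of the support are comparable. -/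
def IsLinearRel (R : ℕ → ℕ → Prop) : Prop :=
  ∀ x ∈ supp R, ∀ y ∈ supp R, x ≠ y → R x y ∨ R y x

/-- The restriction of a relation on ℕ to its support. -/
def restrict (R : ℕ → ℕ → Prop) : supp R → supp R → Prop := fun a b => R a b

/-- The sum `R + R'` of two orders: `R ∪ R' ∪ (supp R × supp R')`. -/
def sumRel (R S : ℕ → ℕ → Prop) : ℕ → ℕ → Prop :=
  fun a b => R a b ∨ S a b ∨ (a ∈ supp R ∧ b ∈ supp S)


open List

def DFA.unionDFA {α σ1 σ2} (M1 : DFA α σ1) (M2 : DFA α σ2) : DFA α (σ1 × σ2) where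
  step s a := (M1.step s.1 a, M2.step s.2 a)
  start := (M1.start, M2.start)
  accept := {s | s.1 ∈ M1.accept ∨ s.2 ∈ M2.accept}

theorem DFA.unionDFA_evalFrom {α σ1 σ2} (M1 : DFA α σ1) (M2 : DFA α σ2) (s : σ1 × σ2)
    (w : List α) : (M1.unionDFA M2).evalFrom s w = (M1.evalFrom s.1 w, M2.evalFrom s.2 w) := by
  induction w generalizing s with
  | nil => rfl
  | cons c w ih =>
    show (M1.unionDFA M2).evalFrom ((M1.unionDFA M2).step s c) w = _
    rw [ih]; rfl

theorem isRegular_union {α} {L1 L2 : Language α} (h1 : L1.IsRegular) (h2 : L2.IsRegular) :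
    Language.IsRegular (L1 + L2) := by
  obtain ⟨σ1, f1, M1, rfl⟩ := h1
  obtain ⟨σ2, f2, M2, rfl⟩ := h2
  refine ⟨σ1 × σ2, by infer_instance, M1.unionDFA M2, ?_⟩
  ext w
  rw [DFA.mem_accepts, Language.mem_add, DFA.mem_accepts, DFA.mem_accepts]
  show (M1.unionDFA M2).evalFrom _ w ∈ _ ↔ _
  rw [DFA.unionDFA_evalFrom]
  rfl

theorem orbit_ev_periodic {β : Type*} [Finite β] (f : β → β) (x : β) :
    ∃ N p, 0 < p ∧ ∀ k, N ≤ k → f^[k + p] x = f^[k] x := by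
  obtain ⟨i, j, hne, heq⟩ := Finite.exists_ne_map_eq_of_infinite (fun n : ℕ => f^[n] x)
  wlog hij : i < j generalizing i j
  · exact this j i hne.symm heq.symm (by omega)
  refine ⟨i, j - i, by omega, fun k hk => ?_⟩
  have h1 : k + (j - i) = (k - i) + j := by omega
  have h2 : (k - i) + i = k := by omega
  calc f^[k + (j-i)] x = f^[k-i] (f^[j] x) := by rw [h1, Function.iterate_add_apply]
  _ = f^[k-i] (f^[i] x) := by rw [heq]
  _ = f^[k] x := by rw [← Function.iterate_add_apply, h2]


theorem encPair_eq (k l : ℕ) :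
    encPair k l = List.replicate (min k l) 0 ++ List.replicate (k - l) 1
      ++ List.replicate (l - k) 2 := by
  apply List.ext_getElem
  · simp [encPair]; omega
  intro i h1 h2
  simp only [encPair, List.length_map, List.length_range] at h1
  simp only [encPair, List.getElem_map, List.getElem_range, List.getElem_append,
    List.length_append, List.length_replicate, List.getElem_replicate]
  split_ifs <;> first | rfl | (exfalso; omega)

theorem encPair_of_le {k l : ℕ} (h : l ≤ k) :
    encPair k l = List.replicate l 0 ++ List.replicate (k - l) 1 := by
  rw [encPair_eq, Nat.min_eq_right h, Nat.sub_eq_zero_of_le h]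
  simp

theorem encPair_of_ge {k l : ℕ} (h : k ≤ l) :
    encPair k l = List.replicate k 0 ++ List.replicate (l - k) 2 := by
  rw [encPair_eq, Nat.min_eq_left h, Nat.sub_eq_zero_of_le h]
  simp

theorem encPair_injective : Function.Injective (fun p : ℕ × ℕ => encPair p.1 p.2) := by
  rintro ⟨k, l⟩ ⟨k', l'⟩ h
  simp only [encPair_eq] at h
  have c0 := congrArg (List.count (0 : Fin 3)) h
  have c1 := congrArg (List.count (1 : Fin 3)) h
  have c2 := congrArg (List.count (2 : Fin 3)) h
  simp [List.count_append, List.count_replicate] at c0 c1 c2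
  have : min k l = min k' l' ∧ k - l = k' - l' ∧ l - k = l' - k' := by
    refine ⟨?_, ?_, ?_⟩ <;> [exact c0; exact c1; exact c2]
  simp only [Prod.mk.injEq]
  omega


def EvP (A : Set ℕ) : Prop := ∃ N p, 0 < p ∧ ∀ k, N ≤ k → (k ∈ A ↔ k + p ∈ A)

abbrev zs (n : ℕ) : List (Fin 3) := List.replicate n 0
abbrev os (n : ℕ) : List (Fin 3) := List.replicate n 1
abbrev ts (n : ℕ) : List (Fin 3) := List.replicate n 2

theorem zs_succ (n : ℕ) : zs (n + 1) = zs n ++ [0] := List.replicate_succ'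
theorem os_succ (n : ℕ) : os (n + 1) = os n ++ [1] := List.replicate_succ'
theorem ts_succ (n : ℕ) : ts (n + 1) = ts n ++ [2] := List.replicate_succ'

section SuppEvP

variable {R : ℕ → ℕ → Prop} {σ : Type} (M : DFA (Fin 3) σ)
  (hL : M.accepts = {w : List (Fin 3) | ∃ k l, R k l ∧ encPair k l = w})

include hL in
theorem memL (k l : ℕ) : R k l ↔ encPair k l ∈ M.accepts := by
  rw [hL]
  constructor
  · exact fun h => ⟨k, l, h, rfl⟩
  · rintro ⟨k', l', h, heq⟩
    obtain ⟨rfl, rfl⟩ := Prod.mk.injEq .. ▸ encPair_injective (a₁ := (k', l')) (a₂ := (k, l)) heq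
    exact h

/-- The orbit map for tracking supp membership. -/
def suppF : σ × Set σ × Set σ → σ × Set σ × Set σ := fun s =>
  (M.step s.1 0, (fun q => M.step q 1) '' s.2.1 ∪ {M.step s.1 0},
    (fun q => M.step q 2) '' s.2.2 ∪ {M.step s.1 0})

theorem suppF_spec (k : ℕ) :
    (suppF M)^[k] (M.start, {M.start}, {M.start}) =
      (M.eval (zs k), {q | ∃ l ≤ k, q = M.eval (zs l ++ os (k - l))},
        {q | ∃ l ≤ k, q = M.eval (zs l ++ ts (k - l))}) := by
  induction k with
  | zero =>
    refine Prod.ext rfl (Prod.ext ?_ ?_) <;>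
    · ext q
      simp only [Set.mem_setOf_eq, Set.mem_singleton_iff]
      constructor
      · rintro rfl; exact ⟨0, le_refl 0, rfl⟩
      · rintro ⟨l, hl, rfl⟩
        interval_cases l
        simp [DFA.eval]
  | succ k ih =>
    rw [Function.iterate_succ_apply', ih]
    have hz : M.step (M.eval (zs k)) 0 = M.eval (zs (k + 1)) := by
      rw [zs_succ, DFA.eval_append_singleton]
    refine Prod.ext hz (Prod.ext ?_ ?_) <;>
    · ext q
      simp only [suppF, Set.mem_union, Set.mem_image, Set.mem_setOf_eq, Set.mem_singleton_iff]
      constructor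
      · rintro (⟨q', ⟨l, hl, rfl⟩, rfl⟩ | rfl)
        · refine ⟨l, by omega, ?_⟩
          rw [show k + 1 - l = (k - l) + 1 from by omega]
          first
          | rw [os_succ, ← List.append_assoc, DFA.eval_append_singleton]
          | rw [ts_succ, ← List.append_assoc, DFA.eval_append_singleton]
        · exact ⟨k + 1, le_refl _, by rw [hz]; simp⟩
      · rintro ⟨l, hl, rfl⟩
        rcases Nat.lt_or_ge l (k + 1) with h | h
        · refine Or.inl ⟨M.eval (zs l ++ List.replicate (k - l) _), ⟨l, by omega, rfl⟩, ?_⟩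
          rw [show k + 1 - l = (k - l) + 1 from by omega]
          first
          | rw [os_succ, ← List.append_assoc, DFA.eval_append_singleton]
          | rw [ts_succ, ← List.append_assoc, DFA.eval_append_singleton]
        · have hle : l = k + 1 := by omega
          subst hle
          rw [hz]
          right
          simp

include hL in
theorem supp_char (k : ℕ) :
    k ∈ supp R ↔
      ((∃ l ≤ k, M.eval (zs l ++ os (k - l)) ∈ M.accept) ∨
        (∃ e, M.evalFrom (M.eval (zs k)) (os e) ∈ M.accept) ∨
        (∃ l ≤ k, M.eval (zs l ++ ts (k - l)) ∈ M.accept) ∨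
        (∃ e, M.evalFrom (M.eval (zs k)) (ts e) ∈ M.accept)) := by
  have key : ∀ w : List (Fin 3), M.eval w ∈ M.accept ↔ w ∈ M.accepts := fun w => Iff.rfl
  have key2 : ∀ x y : List (Fin 3), M.evalFrom (M.eval x) y = M.eval (x ++ y) :=
    fun x y => (M.evalFrom_of_append _ _ _).symm
  constructor
  · rintro ⟨y, hy | hy⟩
    · rcases Nat.le_total y k with h | h
      · refine Or.inl ⟨y, h, ?_⟩
        rw [key, ← encPair_of_le h]
        exact (memL M hL k y).1 hy
      · refine Or.inr (Or.inr (Or.inr ⟨y - k, ?_⟩))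
        rw [key2, key, ← encPair_of_ge h]
        exact (memL M hL k y).1 hy
    · rcases Nat.le_total y k with h | h
      · refine Or.inr (Or.inr (Or.inl ⟨y, h, ?_⟩))
        rw [key, ← encPair_of_ge h]
        exact (memL M hL y k).1 hy
      · refine Or.inr (Or.inl ⟨y - k, ?_⟩)
        rw [key2, key, ← encPair_of_le h]
        exact (memL M hL y k).1 hy
  · rintro (⟨l, hl, h⟩ | ⟨e, h⟩ | ⟨l, hl, h⟩ | ⟨e, h⟩)
    · exact ⟨l, Or.inl ((memL M hL k l).2 (by rw [key, ← encPair_of_le hl] at h; exact h))⟩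
    · refine ⟨k + e, Or.inr ((memL M hL (k + e) k).2 ?_)⟩
      rw [key2, key] at h
      rw [encPair_of_le (Nat.le_add_right k e), Nat.add_sub_cancel_left]
      exact h
    · exact ⟨l, Or.inr ((memL M hL l k).2 (by rw [key, ← encPair_of_ge hl] at h; exact h))⟩
    · refine ⟨k + e, Or.inl ((memL M hL k (k + e)).2 ?_)⟩
      rw [key2, key] at h
      rw [encPair_of_ge (Nat.le_add_right k e), Nat.add_sub_cancel_left]
      exact h

end SuppEvP

theorem supp_EvP {R : ℕ → ℕ → Prop} (hs : SyncRel R) : EvP (supp R) := by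
  obtain ⟨σ, fin, M, hL⟩ := hs
  obtain ⟨N, p, hp, hper⟩ := orbit_ev_periodic (suppF M) (M.start, {M.start}, {M.start})
  refine ⟨N, p, hp, fun k hk => ?_⟩
  rw [supp_char M hL k, supp_char M hL (k + p)]
  have h1 := suppF_spec M k
  have h2 := suppF_spec M (k + p)
  rw [hper k hk, h1] at h2
  have e1 : M.eval (zs k) = M.eval (zs (k + p)) := congrArg Prod.fst h2
  have e2 : {q | ∃ l ≤ k, q = M.eval (zs l ++ os (k - l))}
      = {q | ∃ l ≤ k + p, q = M.eval (zs l ++ os (k + p - l))} :=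
    congrArg (fun x => x.2.1) h2
  have e3 : {q | ∃ l ≤ k, q = M.eval (zs l ++ ts (k - l))}
      = {q | ∃ l ≤ k + p, q = M.eval (zs l ++ ts (k + p - l))} :=
    congrArg (fun x => x.2.2) h2
  constructor
  · rintro (⟨l, hl, h⟩ | ⟨e, h⟩ | ⟨l, hl, h⟩ | ⟨e, h⟩)
    · obtain ⟨l2, hl2, he⟩ := (Set.ext_iff.mp e2 _).mp ⟨l, hl, rfl⟩
      exact Or.inl ⟨l2, hl2, he ▸ h⟩
    · exact Or.inr (Or.inl ⟨e, by rwa [← e1]⟩)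
    · obtain ⟨l2, hl2, he⟩ := (Set.ext_iff.mp e3 _).mp ⟨l, hl, rfl⟩
      exact Or.inr (Or.inr (Or.inl ⟨l2, hl2, he ▸ h⟩))
    · exact Or.inr (Or.inr (Or.inr ⟨e, by rwa [← e1]⟩))
  · rintro (⟨l, hl, h⟩ | ⟨e, h⟩ | ⟨l, hl, h⟩ | ⟨e, h⟩)
    · obtain ⟨l2, hl2, he⟩ := (Set.ext_iff.mp e2 _).mpr ⟨l, hl, rfl⟩
      exact Or.inl ⟨l2, hl2, he ▸ h⟩
    · exact Or.inr (Or.inl ⟨e, by rwa [e1]⟩)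
    · obtain ⟨l2, hl2, he⟩ := (Set.ext_iff.mp e3 _).mpr ⟨l, hl, rfl⟩
      exact Or.inr (Or.inr (Or.inl ⟨l2, hl2, he ▸ h⟩))
    · exact Or.inr (Or.inr (Or.inr ⟨e, by rwa [e1]⟩))

def stepU {N p : ℕ} (hp : 0 < p) (m : Fin (N + p)) : Fin (N + p) :=
  if h : (m : ℕ) + 1 < N + p then ⟨(m : ℕ) + 1, h⟩ else ⟨N, by omega⟩

def rhoU {N p : ℕ} (hp : 0 < p) (k : ℕ) : Fin (N + p) := (stepU hp)^[k] ⟨0, by omega⟩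

theorem rhoU_succ {N p : ℕ} (hp : 0 < p) (k : ℕ) :
    rhoU hp (k + 1) = stepU hp (rhoU (N := N) hp k) := Function.iterate_succ_apply' _ _ _

theorem rhoU_inv {N p : ℕ} (hp : 0 < p) (k : ℕ) :
    (∃ j, k = ((rhoU (N := N) hp k : Fin (N + p)) : ℕ) + j * p) ∧
      (((rhoU (N := N) hp k : Fin (N + p)) : ℕ) < N →
        ((rhoU (N := N) hp k : Fin (N + p)) : ℕ) = k) := by
  induction k with
  | zero => exact ⟨⟨0, by simp [rhoU]⟩, fun _ => by simp [rhoU]⟩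
  | succ k ih =>
    obtain ⟨⟨j, hj⟩, h2⟩ := ih
    rw [rhoU_succ, stepU]
    split
    · next h =>
      refine ⟨⟨j, ?_⟩, ?_⟩
      · simp only
        omega
      · intro h'
        simp only at h' ⊢
        have := h2 (by omega)
        omega
    · next h =>
      have hlt := (rhoU (N := N) hp k).isLt
      refine ⟨⟨j + 1, ?_⟩, fun h' => (Nat.lt_irrefl N h').elim⟩
      have e : (j + 1) * p = j * p + p := by ring
      simp only
      omega

theorem rhoU_mem {A : Set ℕ} {N p : ℕ} (hp : 0 < p)
    (hper : ∀ k, N ≤ k → (k ∈ A ↔ k + p ∈ A)) (k : ℕ) :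
    k ∈ A ↔ ((rhoU (N := N) hp k : Fin (N + p)) : ℕ) ∈ A := by
  have iter : ∀ j m, N ≤ m → (m ∈ A ↔ m + j * p ∈ A) := by
    intro j
    induction j with
    | zero => simp
    | succ j ih =>
      intro m hm
      rw [hper m hm, ih (m + p) (by omega), show m + p + j * p = m + (j + 1) * p from by ring]
  obtain ⟨⟨j, hj⟩, h2⟩ := rhoU_inv hp (N := N) k
  rcases Nat.lt_or_ge ((rhoU (N := N) hp k : Fin (N + p)) : ℕ) N with h | h
  · rw [h2 h]
  · have := iter j _ h
    rw [← hj] at this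
    exact this.symm

section Cross

variable {NA pA NB pB : ℕ} (hpA : 0 < pA) (hpB : 0 < pB) (A B : Set ℕ)

open Classical in
/-- DFA for the language `{0^a 1^b : a + b ∈ A ∧ a ∈ B}`. -/
noncomputable def crossDFA : DFA (Fin 3) (Option (Fin (NA + pA) × (Fin (NB + pB) ⊕ Bool))) where
  step s c :=
    match s with
    | none => none
    | some (a, x) =>
      if c = 0 then
        match x with
        | .inl b => some (stepU hpA a, .inl (stepU hpB b))
        | .inr _ => none
      else if c = 1 then
        match x with
        | .inl b => some (stepU hpA a, .inr (if ((b : ℕ) ∈ B) then true else false))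
        | .inr f => some (stepU hpA a, .inr f)
      else none
  start := some (⟨0, by omega⟩, .inl ⟨0, by omega⟩)
  accept := {s | match s with
    | some (a, .inl b) => ((a : ℕ) ∈ A ∧ (b : ℕ) ∈ B)
    | some (a, .inr f) => ((a : ℕ) ∈ A ∧ f = true)
    | none => False}

theorem crossDFA_eval_zs (a : ℕ) :
    (crossDFA (NA := NA) (NB := NB) hpA hpB A B).eval (zs a) =
      some (rhoU (N := NA) hpA a, .inl (rhoU (N := NB) hpB a)) := by
  induction a with
  | zero => rfl
  | succ a ih =>
    rw [zs_succ, DFA.eval_append_singleton, ih, rhoU_succ, rhoU_succ]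
    simp [crossDFA]

open Classical in
theorem crossDFA_eval_os (b a : ℕ) :
    (crossDFA (NA := NA) (NB := NB) hpA hpB A B).eval (zs a ++ os (b + 1)) =
      some (rhoU (N := NA) hpA (a + (b + 1)),
        (Sum.inr (if ((rhoU (N := NB) hpB a : ℕ) ∈ B) then true else false) :
          Fin (NB + pB) ⊕ Bool)) := by
  induction b with
  | zero =>
    have h1 : zs a ++ os 1 = zs a ++ [1] := rfl
    rw [h1, DFA.eval_append_singleton, crossDFA_eval_zs, rhoU_succ]
    simp [crossDFA]
  | succ b ih =>
    have h1 : zs a ++ os (b + 1 + 1) = (zs a ++ os (b + 1)) ++ [1] := by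
      rw [os_succ (b + 1), List.append_assoc]
    rw [h1, DFA.eval_append_singleton, ih,
      show a + (b + 1 + 1) = (a + (b + 1)) + 1 from by omega, rhoU_succ]
    simp [crossDFA]

theorem crossDFA_shape (w : List (Fin 3)) :
    (∃ a, w = zs a) ∨ (∃ a b, w = zs a ++ os (b + 1)) ∨
      (crossDFA (NA := NA) (NB := NB) hpA hpB A B).eval w = none := by
  induction w using List.reverseRecOn with
  | nil => exact Or.inl ⟨0, rfl⟩
  | append_singleton w c ih =>
    rcases ih with ⟨a, rfl⟩ | ⟨a, b, rfl⟩ | h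
    · fin_cases c
      · exact Or.inl ⟨a + 1, (zs_succ a).symm⟩
      · exact Or.inr (Or.inl ⟨a, 0, rfl⟩)
      · right; right
        rw [DFA.eval_append_singleton, crossDFA_eval_zs]
        simp [crossDFA]
    · fin_cases c
      · right; right
        rw [DFA.eval_append_singleton, crossDFA_eval_os]
        simp [crossDFA]
      · exact Or.inr (Or.inl ⟨a, b + 1, by rw [os_succ (b + 1), List.append_assoc]; rfl⟩)
      · right; right
        rw [DFA.eval_append_singleton, crossDFA_eval_os]
        simp [crossDFA]
    · right; right
      rw [DFA.eval_append_singleton, h]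
      rfl

open Classical in
theorem crossDFA_accepts (hperA : ∀ k, NA ≤ k → (k ∈ A ↔ k + pA ∈ A))
    (hperB : ∀ k, NB ≤ k → (k ∈ B ↔ k + pB ∈ B)) :
    (crossDFA (NA := NA) (NB := NB) hpA hpB A B).accepts =
      {w : List (Fin 3) | ∃ a b, (a + b ∈ A ∧ a ∈ B) ∧ w = zs a ++ os b} := by
  ext w
  rw [DFA.mem_accepts]
  constructor
  · intro hw
    rcases crossDFA_shape hpA hpB A B w with ⟨a, rfl⟩ | ⟨a, b, rfl⟩ | h
    · rw [crossDFA_eval_zs] at hw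
      have hw' : ((rhoU (N := NA) hpA a : ℕ) ∈ A ∧ (rhoU (N := NB) hpB a : ℕ) ∈ B) := hw
      refine ⟨a, 0, ⟨?_, (rhoU_mem hpB hperB a).2 hw'.2⟩, by simp⟩
      have := (rhoU_mem hpA hperA a).2 hw'.1
      simpa using this
    · rw [crossDFA_eval_os] at hw
      have hw' : (rhoU (N := NA) hpA (a + (b + 1)) : ℕ) ∈ A ∧
          (if (rhoU (N := NB) hpB a : ℕ) ∈ B then true else false) = true := hw
      have hb : a ∈ B := by
        refine (rhoU_mem hpB hperB a).2 ?_
        by_cases hx : (rhoU (N := NB) hpB a : ℕ) ∈ B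
        · exact hx
        · simp [hx] at hw'
      exact ⟨a, b + 1, ⟨(rhoU_mem hpA hperA _).2 hw'.1, hb⟩, rfl⟩
    · rw [h] at hw
      exact absurd hw (by simp [crossDFA])
  · rintro ⟨a, b, ⟨hab, haB⟩, rfl⟩
    cases b with
    | zero =>
      have h0 : zs a ++ os 0 = zs a := by simp
      rw [h0, crossDFA_eval_zs]
      exact show ((rhoU (N := NA) hpA a : ℕ) ∈ A ∧ (rhoU (N := NB) hpB a : ℕ) ∈ B) from
        ⟨(rhoU_mem hpA hperA a).1 (by simpa using hab), (rhoU_mem hpB hperB a).1 haB⟩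
    | succ b =>
      rw [crossDFA_eval_os]
      exact show ((rhoU (N := NA) hpA (a + (b + 1)) : ℕ) ∈ A ∧ _ = true) from
        ⟨(rhoU_mem hpA hperA _).1 hab, by simp [(rhoU_mem hpB hperB a).1 haB]⟩

end Cross

theorem crossL1_regular {A B : Set ℕ} (hA : EvP A) (hB : EvP B) :
    Language.IsRegular {w : List (Fin 3) | ∃ a b, (a + b ∈ A ∧ a ∈ B) ∧ w = zs a ++ os b} := by
  obtain ⟨NA, pA, hpA, hperA⟩ := hA
  obtain ⟨NB, pB, hpB, hperB⟩ := hB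
  exact ⟨_, by infer_instance, crossDFA hpA hpB A B, crossDFA_accepts hpA hpB A B hperA hperB⟩

theorem crossL2_regular {A B : Set ℕ} (hA : EvP A) (hB : EvP B) :
    Language.IsRegular {w : List (Fin 3) | ∃ a b, (a ∈ A ∧ a + b ∈ B) ∧ w = zs a ++ ts b} := by
  obtain ⟨σ, fin, M, hM⟩ := crossL1_regular hB hA
  refine ⟨σ, fin, M.comap ![0, 2, 1], ?_⟩
  rw [DFA.accepts_comap, hM]
  have hff : ∀ w : List (Fin 3), List.map ![0, 2, 1] (List.map ![0, 2, 1] w) = w := by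
    intro w
    rw [List.map_map]
    have : (![0, 2, 1] ∘ ![0, 2, 1] : Fin 3 → Fin 3) = id := by decide
    rw [this, List.map_id]
  ext w
  show List.map ![0, 2, 1] w ∈ ({w | ∃ a b, (a + b ∈ B ∧ a ∈ A) ∧ w = zs a ++ os b} : Set (List (Fin 3))) ↔ _
  constructor
  · rintro ⟨a, b, hc, hw⟩
    refine ⟨a, b, ⟨hc.2, hc.1⟩, ?_⟩
    rw [← hff w, hw]
    simp only [List.map_append, List.map_replicate]
    rfl
  · rintro ⟨a, b, hc, rfl⟩
    refine ⟨a, b, ⟨hc.2, hc.1⟩, ?_⟩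
    simp only [List.map_append, List.map_replicate]
    rfl


def langOf (P : List (Fin 3) → Prop) : Language (Fin 3) := {w | P w}

theorem langOf_mem (P : List (Fin 3) → Prop) (w : List (Fin 3)) : w ∈ langOf P ↔ P w := Iff.rfl

theorem sumL_eq (R R' : ℕ → ℕ → Prop) :
    langOf (fun w => ∃ k l, sumRel R R' k l ∧ encPair k l = w) =
      (langOf (fun w => ∃ k l, R k l ∧ encPair k l = w)
        + langOf (fun w => ∃ k l, R' k l ∧ encPair k l = w))
      + (langOf (fun w => ∃ a b, (a + b ∈ supp R ∧ a ∈ supp R') ∧ w = zs a ++ os b)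
        + langOf (fun w => ∃ a b, (a ∈ supp R ∧ a + b ∈ supp R') ∧ w = zs a ++ ts b)) := by
  ext w
  simp only [Language.mem_add, langOf_mem]
  constructor
  · rintro ⟨k, l, h | h | ⟨hk, hl⟩, rfl⟩
    · exact Or.inl (Or.inl ⟨k, l, h, rfl⟩)
    · exact Or.inl (Or.inr ⟨k, l, h, rfl⟩)
    · rcases Nat.le_total l k with h | h
      · refine Or.inr (Or.inl ⟨l, k - l, ⟨?_, hl⟩, encPair_of_le h⟩)
        rwa [show l + (k - l) = k from by omega]
      · refine Or.inr (Or.inr ⟨k, l - k, ⟨hk, ?_⟩, encPair_of_ge h⟩)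
        rwa [show k + (l - k) = l from by omega]
  · rintro ((⟨k, l, h, rfl⟩ | ⟨k, l, h, rfl⟩) | (⟨a, b, ⟨h1, h2⟩, rfl⟩ | ⟨a, b, ⟨h1, h2⟩, rfl⟩))
    · exact ⟨k, l, Or.inl h, rfl⟩
    · exact ⟨k, l, Or.inr (Or.inl h), rfl⟩
    · refine ⟨a + b, a, Or.inr (Or.inr ⟨h1, h2⟩), ?_⟩
      rw [encPair_of_le (Nat.le_add_right a b), Nat.add_sub_cancel_left]
    · refine ⟨a, a + b, Or.inr (Or.inr ⟨h1, h2⟩), ?_⟩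
      rw [encPair_of_ge (Nat.le_add_right a b), Nat.add_sub_cancel_left]


theorem sum_of_synchronous_orders (R R' : ℕ → ℕ → Prop)
    (hsR : SyncRel R) (hsR' : SyncRel R')
    (hoR : IsOrderRel R) (hoR' : IsOrderRel R')
    (hdisj : Disjoint (supp R) (supp R')) :
    SyncRel (sumRel R R') ∧ IsOrderRel (sumRel R R') ∧
    Nonempty (restrict (sumRel R R') ≃r Sum.Lex (restrict R) (restrict R')) := by
  classical
  have hd : ∀ {x}, x ∈ supp R → x ∉ supp R' := fun h => Set.disjoint_left.mp hdisj h
  have hRs : ∀ {x y}, R x y → x ∈ supp R ∧ y ∈ supp R :=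
    fun h => ⟨⟨_, Or.inl h⟩, ⟨_, Or.inr h⟩⟩
  have hRs' : ∀ {x y}, R' x y → x ∈ supp R' ∧ y ∈ supp R' :=
    fun h => ⟨⟨_, Or.inl h⟩, ⟨_, Or.inr h⟩⟩
  refine ⟨?_, ⟨?_, ?_⟩, ⟨?_⟩⟩
  · -- synchronicity
    show Language.IsRegular (langOf (fun w => ∃ k l, sumRel R R' k l ∧ encPair k l = w))
    rw [sumL_eq]
    exact isRegular_union (isRegular_union hsR hsR')
      (isRegular_union (crossL1_regular (supp_EvP hsR) (supp_EvP hsR'))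
        (crossL2_regular (supp_EvP hsR) (supp_EvP hsR')))
  · -- transitivity
    rintro x y z (h1 | h1 | ⟨hx, hy⟩) (h2 | h2 | ⟨hy', hz⟩)
    · exact Or.inl (hoR.1 _ _ _ h1 h2)
    · exact absurd (hRs h1).2 (hd · (hRs' h2).1)
    · exact Or.inr (Or.inr ⟨(hRs h1).1, hz⟩)
    · exact absurd (hRs h2).1 (hd · (hRs' h1).2)
    · exact Or.inr (Or.inl (hoR'.1 _ _ _ h1 h2))
    · exact absurd hy' (hd · (hRs' h1).2)
    · exact absurd (hRs h2).1 (fun h => hd h hy)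
    · exact Or.inr (Or.inr ⟨hx, (hRs' h2).2⟩)
    · exact absurd hy' (fun h => hd h hy)
  · -- no 2-cycle
    rintro ⟨x, y, h1 | h1 | ⟨hx, hy⟩, h2 | h2 | ⟨hy', hx'⟩⟩
    · exact hoR.2 ⟨x, y, h1, h2⟩
    · exact hd (hRs h1).1 (hRs' h2).2
    · exact hd (hRs h1).1 hx'
    · exact hd (hRs h2).1 (hRs' h1).2
    · exact hoR'.2 ⟨x, y, h1, h2⟩
    · exact hd hy' (hRs' h1).2
    · exact hd (hRs h2).1 hy
    · exact hd hx (hRs' h2).2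
    · exact hd hx hx'
  · -- the isomorphism
    have memA : ∀ {x}, x ∈ supp R → x ∈ supp (sumRel R R') :=
      fun hx => hx.imp (fun _ h => h.imp Or.inl Or.inl)
    have memB : ∀ {x}, x ∈ supp R' → x ∈ supp (sumRel R R') :=
      fun hx => hx.imp (fun _ h => h.imp (fun g => Or.inr (Or.inl g)) (fun g => Or.inr (Or.inl g)))
    have memAB : ∀ {x}, x ∈ supp (sumRel R R') → x ∉ supp R → x ∈ supp R' := by
      rintro x ⟨y, (h | h | ⟨hx, hy⟩) | (h | h | ⟨hy, hx⟩)⟩ hnx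
      · exact absurd (hRs h).1 hnx
      · exact (hRs' h).1
      · exact absurd hx hnx
      · exact absurd (hRs h).2 hnx
      · exact (hRs' h).2
      · exact hx
    refine ⟨⟨fun x => if h : (x : ℕ) ∈ supp R then Sum.inl ⟨x, h⟩
        else Sum.inr ⟨x, memAB x.2 h⟩,
      Sum.elim (fun a => ⟨a, memA a.2⟩) (fun b => ⟨b, memB b.2⟩), ?_, ?_⟩, ?_⟩
    · intro x
      by_cases h : (x : ℕ) ∈ supp R
      · simp only [dif_pos h, Sum.elim_inl]
      · simp only [dif_neg h, Sum.elim_inr]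
    · rintro (⟨a, ha⟩ | ⟨b, hb⟩)
      · exact dif_pos ha
      · exact dif_neg (fun h => hd h hb)
    · intro a b
      simp only [Equiv.coe_fn_mk]
      by_cases ha : (a : ℕ) ∈ supp R <;> by_cases hb : (b : ℕ) ∈ supp R
      · simp only [dif_pos ha, dif_pos hb]
        constructor
        · intro h
          have h2 := Sum.lex_inl_inl.mp h
          exact Or.inl h2
        · rintro (h | h | ⟨_, hb'⟩)
          · exact Sum.lex_inl_inl.mpr h
          · exact absurd (hRs' h).1 (hd ha)
          · exact absurd hb' (hd hb)
      · simp only [dif_pos ha, dif_neg hb]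
        constructor
        · intro _
          exact Or.inr (Or.inr ⟨ha, memAB b.2 hb⟩)
        · intro _
          exact Sum.Lex.sep _ _
      · simp only [dif_neg ha, dif_pos hb]
        constructor
        · intro h
          exact absurd h (Sum.lex_inr_inl)
        · rintro (h | h | ⟨ha', _⟩)
          · exact absurd (hRs h).1 ha
          · exact absurd (hRs' h).2 (hd hb)
          · exact absurd ha' ha
      · simp only [dif_neg ha, dif_neg hb]
        constructor
        · intro h
          have h2 := Sum.lex_inr_inr.mp h
          exact Or.inr (Or.inl h2)
        · rintro (h | h | ⟨ha', _⟩)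
          · exact absurd (hRs h).1 ha
          · exact Sum.lex_inr_inr.mpr h
          · exact absurd ha' ha
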